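/- arXiv:2105.05955 — 7 statements merged into one kernel-verified Lean document; each statement's English description precedes it below -/
import Mathlib

section
/- Let N ∈ ℝ³ be nonzero, q ∈ ℝ³, and let D_c = R_{[N,q]}(0) and N_D = R_{[N,0]}(−e₃). Then for every T ∈ ℝ³: T lies on the forward-pointing ray {D_c + t·N_D : t ≥ 0} if and only if R_{[N,q]}(T) ∈ Z≤0; and T lies on the backward-pointing ray {D_c + t·N_D : t ≤ 0} if and only if R_{[N,q]}(T) ∈ Z≥0. -/
open RealInnerProductSpace

noncomputable section

/-- ℝ³ with the Euclidean inner product and norm. -/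
abbrev E3 := EuclideanSpace ℝ (Fin 3)

/-- The standard basis vector e₃ = (0,0,1). -/
def e3 : E3 := EuclideanSpace.single 2 1

/-- Reflection over the plane `{x | ⟪N, x - q⟫ = 0}`:
`R_{[N,q]}(a) = a − 2(⟪N, a − q⟫/‖N‖²) • N`. -/
def refl3 (N q a : E3) : E3 := a - (2 * ⟪N, a - q⟫ / ‖N‖ ^ 2) • N

/-- The nonpositive part of the z-axis, `Z≤0`. -/
def Zneg : Set E3 := {x | ∃ t : ℝ, t ≤ 0 ∧ x = t • e3}

/-- The nonnegative part of the z-axis, `Z≥0`. -/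
def Zpos : Set E3 := {x | ∃ t : ℝ, 0 ≤ t ∧ x = t • e3}

lemma refl3_invol (N q : E3) (hN : N ≠ 0) (a : E3) : refl3 N q (refl3 N q a) = a := by
  have h : ⟪N, N⟫ = ‖N‖ ^ 2 := real_inner_self_eq_norm_sq N
  have hn : ‖N‖ ^ 2 ≠ 0 := pow_ne_zero 2 (norm_ne_zero_iff.mpr hN)
  simp only [refl3, inner_sub_right, inner_smul_right, h]
  match_scalars <;> field_simp <;> ring

lemma refl3_comp (N q : E3) (hN : N ≠ 0) (t : ℝ) :
    refl3 N q (refl3 N q 0 + t • refl3 N 0 (-e3)) = (-t) • e3 := by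
  have h : ⟪N, N⟫ = ‖N‖ ^ 2 := real_inner_self_eq_norm_sq N
  have hn : ‖N‖ ^ 2 ≠ 0 := pow_ne_zero 2 (norm_ne_zero_iff.mpr hN)
  simp only [refl3, inner_sub_right, inner_smul_right, inner_add_right, inner_neg_right,
    inner_zero_right, sub_zero, zero_sub, inner_neg_right, h]
  match_scalars <;> field_simp <;> ring

/-- **Pointing Lemma.** A configuration with midplane normal to `N ≠ 0` through `q`
points at `T` iff `R_{[N,q]}(T) ∈ Z≤0`, and backward-points at `T` iff
`R_{[N,q]}(T) ∈ Z≥0`. -/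
theorem pointing_lemma (N q : E3) (hN : N ≠ 0) (T : E3) :
    ((∃ t : ℝ, 0 ≤ t ∧ T = refl3 N q 0 + t • refl3 N 0 (-e3)) ↔ refl3 N q T ∈ Zneg) ∧
    ((∃ t : ℝ, t ≤ 0 ∧ T = refl3 N q 0 + t • refl3 N 0 (-e3)) ↔ refl3 N q T ∈ Zpos) := by
  constructor
  · constructor
    · rintro ⟨t, ht, rfl⟩
      exact ⟨-t, by linarith, refl3_comp N q hN t⟩
    · rintro ⟨s, hs, hT⟩
      refine ⟨-s, by linarith, ?_⟩
      have := refl3_comp N q hN (-s)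
      rw [neg_neg, ← hT] at this
      have := congrArg (refl3 N q) this
      rwa [refl3_invol N q hN, refl3_invol N q hN, eq_comm] at this
  · constructor
    · rintro ⟨t, ht, rfl⟩
      exact ⟨-t, by linarith, refl3_comp N q hN t⟩
    · rintro ⟨s, hs, hT⟩
      refine ⟨-s, by linarith, ?_⟩
      have := refl3_comp N q hN (-s)
      rw [neg_neg, ← hT] at this
      have := congrArg (refl3 N q) this
      rwa [refl3_invol N q hN, refl3_invol N q hN, eq_comm] at this
end
end

section
/- Let N ∈ ℝ³ be nonzero, q ∈ ℝ³, D_c = R_{[N,q]}(0), N_D = R_{[N,0]}(−e₃), and T ∈ ℝ³. Then T lies on the forward-pointing ray {D_c + t·N_D : t ≥ 0} if and only if either (⟨N, T − q⟩ = 0 and T ∈ Z≤0), or there exists K ∈ Z≤0 with K ≠ T such that the plane {x : ⟨N, x − q⟩ = 0} equals the plane {x : ⟨T − K, x − (T + K)/2⟩ = 0}. The same statement holds for the backward-pointing ray {D_c + t·N_D : t ≤ 0} with Z≤0 replaced by Z≥0. -/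
open RealInnerProductSpace

noncomputable section

lemma refl3_affine (N q v : E3) (s : ℝ) :
    refl3 N q 0 + s • refl3 N 0 v = refl3 N q (s • v) := by
  simp only [refl3, inner_sub_right, inner_smul_right, inner_zero_right, sub_zero,
    zero_sub, inner_neg_right]
  module

lemma key (N q : E3) (hN : N ≠ 0) (T K : E3) :
    T = refl3 N q K ↔
      ((⟪N, T - q⟫ = 0 ∧ K = T) ∨
        (K ≠ T ∧ {x : E3 | ⟪N, x - q⟫ = 0} =
          {x : E3 | ⟪T - K, x - (1/2 : ℝ) • (T + K)⟫ = 0})) := by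
  have hn : ‖N‖ ^ 2 ≠ 0 := pow_ne_zero 2 (norm_ne_zero_iff.mpr hN)
  constructor
  · intro hT
    by_cases h0 : ⟪N, K - q⟫ = 0
    · left
      have hKT : refl3 N q K = K := by simp [refl3, h0]
      rw [hT, hKT]
      exact ⟨h0, rfl⟩
    · right
      set c : ℝ := -(2 * ⟪N, K - q⟫ / ‖N‖ ^ 2) with hc_def
      have hc : c ≠ 0 := by
        simp only [hc_def, ne_eq, neg_eq_zero, div_eq_zero_iff, mul_eq_zero]
        push_neg
        exact ⟨⟨two_ne_zero, h0⟩, hn⟩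
      have hTK : T - K = c • N := by
        rw [hT]; simp only [refl3, hc_def, neg_smul]; abel
      have hmid : ⟪N, (1/2 : ℝ) • (T + K) - q⟫ = 0 := by
        have h1 : (1/2 : ℝ) • (T + K) - q = ((1/2 : ℝ) • (T - K)) + (K - q) := by
          module
        rw [h1, inner_add_right, inner_smul_right, hTK, real_inner_smul_right,
          real_inner_self_eq_norm_sq, hc_def]
        field_simp
        ring
      have hKneT : K ≠ T := by
        intro h
        rw [h, sub_self] at hTK
        rcases smul_eq_zero.mp hTK.symm with h' | h'
        · exact hc h'
        · exact hN h'
      refine ⟨hKneT, ?_⟩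
      ext x
      simp only [Set.mem_setOf_eq]
      have hx : ⟪T - K, x - (1/2 : ℝ) • (T + K)⟫ = c * ⟪N, x - q⟫ := by
        have h2 : x - (1/2 : ℝ) • (T + K) = (x - q) - ((1/2 : ℝ) • (T + K) - q) := by
          abel
        rw [hTK, h2, real_inner_smul_left, inner_sub_right, hmid, sub_zero]
      rw [hx]
      constructor
      · intro h; rw [h, mul_zero]
      · intro h; exact (mul_eq_zero.mp h).resolve_left hc
  · rintro (⟨h0, rfl⟩ | ⟨hne, hplane⟩)
    · simp [refl3, h0]
    · set w := T - K with hw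
      set m := (1/2 : ℝ) • (T + K) with hm
      have hwne : w ≠ 0 := sub_ne_zero.mpr (Ne.symm hne)
      have hq : ⟪w, q - m⟫ = 0 := by
        have hqm : q ∈ {x : E3 | ⟪N, x - q⟫ = 0} := by simp
        rw [hplane] at hqm; exact hqm
      set c : ℝ := ⟪N, w⟫ / ‖N‖ ^ 2 with hc_def
      have hwc : w = c • N := by
        set v := w - c • N with hv_def
        have hNv : ⟪N, v⟫ = 0 := by
          rw [hv_def, inner_sub_right, real_inner_smul_right,
            real_inner_self_eq_norm_sq, hc_def, div_mul_cancel₀ _ hn, sub_self]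
        have hqv : q + v ∈ {x : E3 | ⟪N, x - q⟫ = 0} := by
          show ⟪N, q + v - q⟫ = 0
          rw [add_sub_cancel_left]
          exact hNv
        rw [hplane] at hqv
        have hqv' : ⟪w, q + v - m⟫ = 0 := hqv
        have h3 : q + v - m = v + (q - m) := by abel
        rw [h3, inner_add_right, hq, add_zero] at hqv'
        have hvv : ⟪v, v⟫ = 0 := by
          have hsplit : ⟪v, v⟫ = ⟪w, v⟫ - c * ⟪N, v⟫ := by
            conv_lhs => rw [hv_def]
            rw [inner_sub_left, real_inner_smul_left]
          rw [hsplit, hqv', hNv, mul_zero, sub_zero]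
        have : v = 0 := inner_self_eq_zero.mp hvv
        rw [hv_def, sub_eq_zero] at this
        exact this
      have hc0 : c ≠ 0 := by
        intro h; apply hwne; rw [hwc, h, zero_smul]
      have hmq : ⟪N, m - q⟫ = 0 := by
        have h5 : ⟪c • N, q - m⟫ = 0 := by rw [← hwc]; exact hq
        rw [real_inner_smul_left] at h5
        have h6 := (mul_eq_zero.mp h5).resolve_left hc0
        rw [← neg_sub, inner_neg_right, h6, neg_zero]
      have hKq : ⟪N, K - q⟫ = -(c * ‖N‖ ^ 2) / 2 := by
        have h4 : K - q = (m - q) - (1/2 : ℝ) • w := by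
          rw [hm, hw]; module
        rw [h4, inner_sub_right, hmq, zero_sub, inner_smul_right, hwc,
          real_inner_smul_right, real_inner_self_eq_norm_sq]
        ring
      have h7 : (2 : ℝ) * (-(c * ‖N‖ ^ 2) / 2) / ‖N‖ ^ 2 = -c := by
        field_simp
      rw [refl3, hKq, h7, neg_smul, sub_neg_eq_add, ← hwc, hw]
      abel

lemma ray_iff (N q : E3) (hN : N ≠ 0) (T : E3) (Z : Set E3) (P : ℝ → Prop)
    (hZ : ∀ K, K ∈ Z ↔ ∃ t : ℝ, P t ∧ K = (-t) • e3) :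
    (∃ t : ℝ, P t ∧ T = refl3 N q 0 + t • refl3 N 0 (-e3)) ↔
      ((⟪N, T - q⟫ = 0 ∧ T ∈ Z) ∨
        ∃ K ∈ Z, K ≠ T ∧
          {x : E3 | ⟪N, x - q⟫ = 0} =
            {x : E3 | ⟪T - K, x - (1/2 : ℝ) • (T + K)⟫ = 0}) := by
  have hray : ∀ t : ℝ, refl3 N q 0 + t • refl3 N 0 (-e3) = refl3 N q ((-t) • e3) := by
    intro t
    rw [refl3_affine N q (-e3) t, smul_neg, neg_smul]
  constructor
  · rintro ⟨t, ht, hT⟩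
    rw [hray t] at hT
    have hKmem : (-t) • e3 ∈ Z := (hZ _).mpr ⟨t, ht, rfl⟩
    rcases (key N q hN T ((-t) • e3)).mp hT with ⟨h0, hKT⟩ | ⟨hne, hplane⟩
    · exact Or.inl ⟨h0, hKT ▸ hKmem⟩
    · exact Or.inr ⟨(-t) • e3, hKmem, hne, hplane⟩
  · rintro (⟨h0, hTZ⟩ | ⟨K, hKZ, hne, hplane⟩)
    · rcases (hZ T).mp hTZ with ⟨t, ht, hTt⟩
      refine ⟨t, ht, ?_⟩
      rw [hray t, ← hTt]
      exact (key N q hN T T).mpr (Or.inl ⟨h0, rfl⟩)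
    · rcases (hZ K).mp hKZ with ⟨t, ht, hKt⟩
      refine ⟨t, ht, ?_⟩
      rw [hray t, ← hKt]
      exact (key N q hN T K).mpr (Or.inr ⟨hne, hplane⟩)

/-- **Affine pointing to midplane.** A configuration with midplane normal to `N ≠ 0`
through `q` points at `T` iff either `T` lies on the midplane and `T ∈ Z≤0`, or there
is `K ∈ Z≤0`, `K ≠ T`, such that the midplane is the perpendicular bisector plane of
`T` and `K`; analogously for backward-pointing with `Z≥0`. -/
theorem affine_pointing_to_midplane (N q : E3) (hN : N ≠ 0) (T : E3) :
    ((∃ t : ℝ, 0 ≤ t ∧ T = refl3 N q 0 + t • refl3 N 0 (-e3)) ↔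
      ((⟪N, T - q⟫ = 0 ∧ T ∈ Zneg) ∨
        ∃ K ∈ Zneg, K ≠ T ∧
          {x : E3 | ⟪N, x - q⟫ = 0} =
            {x : E3 | ⟪T - K, x - (1/2 : ℝ) • (T + K)⟫ = 0})) ∧
    ((∃ t : ℝ, t ≤ 0 ∧ T = refl3 N q 0 + t • refl3 N 0 (-e3)) ↔
      ((⟪N, T - q⟫ = 0 ∧ T ∈ Zpos) ∨
        ∃ K ∈ Zpos, K ≠ T ∧
          {x : E3 | ⟪N, x - q⟫ = 0} =
            {x : E3 | ⟪T - K, x - (1/2 : ℝ) • (T + K)⟫ = 0})) := by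
  constructor
  · exact ray_iff N q hN T Zneg (fun t => 0 ≤ t) (by
      intro K
      constructor
      · rintro ⟨s, hs, rfl⟩; exact ⟨-s, by linarith, by rw [neg_neg]⟩
      · rintro ⟨t, ht, rfl⟩; exact ⟨-t, by linarith, rfl⟩)
  · exact ray_iff N q hN T Zpos (fun t => t ≤ 0) (by
      intro K
      constructor
      · rintro ⟨s, hs, rfl⟩; exact ⟨-s, by linarith, by rw [neg_neg]⟩
      · rintro ⟨t, ht, rfl⟩; exact ⟨-t, by linarith, rfl⟩)
end
end

section
/- Let N ∈ ℝ³ be nonzero, q ∈ ℝ³, and for i = 1, 2, 3 let N_i ∈ ℝ³ be unit vectors, B_i ∈ ℝ³, and ℓ_i > 0, with M_i = {x ∈ ℝ³ : ⟨N_i, x − B_i⟩ = 0 ∧ ‖x − B_i‖ = ℓ_i} and P = {x ∈ ℝ³ : ⟨N, x − q⟩ = 0}. If N × N_i ≠ 0 for each i, then each intersection M_i ∩ P has at most 2 elements, and the set {(m₁, m₂, m₃) ∈ ℝ³ × ℝ³ × ℝ³ : m₁ ∈ M₁ ∩ P ∧ m₂ ∈ M₂ ∩ P ∧ m₃ ∈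 M₃ ∩ P} is finite with at most 8 elements. -/
open RealInnerProductSpace

noncomputable section

/-- The cross product on ℝ³. -/
def cross3 (a b : E3) : E3 :=
  (WithLp.equiv 2 (Fin 3 → ℝ)).symm
    ![a 1 * b 2 - a 2 * b 1, a 2 * b 0 - a 0 * b 2, a 0 * b 1 - a 1 * b 0]

lemma cross3_smul_self (N : E3) (c : ℝ) : cross3 N (c • N) = 0 := by
  have h : ∀ j : Fin 3, cross3 N (c • N) j = 0 := by
    intro j
    fin_cases j <;> simp [cross3, WithLp.equiv_symm_apply, PiLp.toLp_apply] <;> ring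
  ext j; exact h j

lemma indep_of_cross3 (N M : E3) (hN : N ≠ 0) (h : cross3 N M ≠ 0) :
    LinearIndependent ℝ ![N, M] := by
  rw [LinearIndependent.pair_iff' hN]
  intro a ha
  exact h (by rw [← ha]; exact cross3_smul_self N a)

lemma parallel_of_orth (N M : E3) (hind : LinearIndependent ℝ ![N, M]) (v w : E3)
    (hv : v ≠ 0) (hvN : ⟪N,v⟫ = 0) (hvM : ⟪M,v⟫ = 0) (hwN : ⟪N,w⟫ = 0) (hwM : ⟪M,w⟫ = 0) :
    ∃ t : ℝ, w = t • v := by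
  set K := Submodule.span ℝ ({N, M} : Set E3) with hK
  have hrange : Set.range ![N, M] = ({N, M} : Set E3) := by
    ext x
    constructor
    · rintro ⟨y, rfl⟩; fin_cases y <;> simp
    · rintro (rfl | rfl)
      · exact ⟨0, rfl⟩
      · exact ⟨1, rfl⟩
  have hfr : Module.finrank ℝ K = 2 := by
    have := finrank_span_eq_card hind
    rw [hrange] at this
    simpa using this
  have hmem : ∀ x : E3, ⟪N,x⟫ = 0 → ⟪M,x⟫ = 0 → x ∈ Kᗮ := by
    intro x hxN hxM
    rw [Submodule.mem_orthogonal]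
    intro u hu
    induction hu using Submodule.span_induction with
    | mem u hu => rcases hu with h | h <;> subst h <;> assumption
    | zero => simp
    | add a b _ _ ha hb => rw [inner_add_left, ha, hb, add_zero]
    | smul c a _ ha => rw [real_inner_smul_left, ha, mul_zero]
  have hfrO : Module.finrank ℝ Kᗮ = 1 := by
    have h := Submodule.finrank_add_finrank_orthogonal K
    rw [hfr, finrank_euclideanSpace_fin] at h
    omega
  have hle : Submodule.span ℝ ({v} : Set E3) ≤ Kᗮ := by
    rw [Submodule.span_le, Set.singleton_subset_iff]
    exact hmem v hvN hvM
  have heq : Submodule.span ℝ ({v} : Set E3) = Kᗮ := by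
    apply Submodule.eq_of_le_of_finrank_eq hle
    rw [hfrO, finrank_span_singleton hv]
  have : w ∈ Submodule.span ℝ ({v} : Set E3) := heq ▸ hmem w hwN hwM
  rcases Submodule.mem_span_singleton.mp this with ⟨t, ht⟩
  exact ⟨t, ht.symm⟩

/-- A circle meets a non-parallel plane in at most two points. -/
lemma circle_inter_plane (N q : E3) (hN : N ≠ 0) (Ni B : E3) (ℓ : ℝ)
    (hc : cross3 N Ni ≠ 0) :
    ∀ a ∈ ({x : E3 | ⟪Ni, x - B⟫ = 0 ∧ ‖x - B‖ = ℓ} ∩ {x | ⟪N, x - q⟫ = 0}),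
    ∀ b ∈ ({x : E3 | ⟪Ni, x - B⟫ = 0 ∧ ‖x - B‖ = ℓ} ∩ {x | ⟪N, x - q⟫ = 0}),
    ∀ c ∈ ({x : E3 | ⟪Ni, x - B⟫ = 0 ∧ ‖x - B‖ = ℓ} ∩ {x | ⟪N, x - q⟫ = 0}),
    a = b ∨ c = a ∨ c = b := by
  rintro a ⟨⟨haNi, haB⟩, haN⟩ b ⟨⟨hbNi, hbB⟩, hbN⟩ c ⟨⟨hcNi, hcB⟩, hcN⟩
  by_cases hab : a = b
  · exact Or.inl hab
  right
  have hind := indep_of_cross3 N Ni hN hc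
  -- differences are orthogonal to N and Ni
  have key : ∀ x y : E3, ⟪N, x - q⟫ = 0 → ⟪N, y - q⟫ = 0 → ⟪N, y - x⟫ = 0 := by
    intro x y hx hy
    have : y - x = (y - q) - (x - q) := by abel
    rw [this, inner_sub_right, hx, hy, sub_zero]
  have keyi : ∀ x y : E3, ⟪Ni, x - B⟫ = 0 → ⟪Ni, y - B⟫ = 0 → ⟪Ni, y - x⟫ = 0 := by
    intro x y hx hy
    have : y - x = (y - B) - (x - B) := by abel
    rw [this, inner_sub_right, hx, hy, sub_zero]
  have hv : b - a ≠ 0 := sub_ne_zero.mpr fun h => hab h.symm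
  obtain ⟨t, ht⟩ := parallel_of_orth N Ni hind (b - a) (c - a) hv
    (key a b haN hbN) (keyi a b haNi hbNi) (key a c haN hcN) (keyi a c haNi hcNi)
  set v := b - a with hvdef
  set u := a - B with hudef
  -- ‖u + v‖ = ‖u‖ and ‖u + t • v‖ = ‖u‖
  have hb' : ‖u + v‖ = ‖u‖ := by
    have : u + v = b - B := by rw [hudef, hvdef]; abel
    rw [this, hbB, ← haB]
  have hc' : ‖u + t • v‖ = ‖u‖ := by
    have h1 : c - a = t • v := ht
    have : u + t • v = c - B := by rw [hudef, ← h1]; abel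
    rw [this, hcB, ← haB]
  have hsq : ∀ w : E3, ‖u + w‖ = ‖u‖ → 2 * ⟪u, w⟫ + ‖w‖ ^ 2 = 0 := by
    intro w hw
    have h1 : ‖u + w‖ ^ 2 = ‖u‖ ^ 2 := by rw [hw]
    rw [norm_add_sq_real] at h1
    linarith
  have e1 := hsq v hb'
  have e2 := hsq (t • v) hc'
  rw [real_inner_smul_right, norm_smul, mul_pow] at e2
  have hnv : ‖v‖ ^ 2 ≠ 0 := pow_ne_zero 2 (norm_ne_zero_iff.mpr hv)
  -- e2 : 2 * (t * ⟪u,v⟫) + ‖t‖^2 * ‖v‖^2 = 0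
  have ht2 : t * (2 * ⟪u, v⟫ + t * ‖v‖ ^ 2) = 0 := by
    have : ‖t‖ ^ 2 = t ^ 2 := by rw [Real.norm_eq_abs, sq_abs]
    rw [this] at e2
    ring_nf
    ring_nf at e2
    linarith
  rcases mul_eq_zero.mp ht2 with h0 | h1
  · left
    have : c - a = 0 := by rw [ht, h0, zero_smul]
    exact sub_eq_zero.mp this
  · right
    have : (t - 1) * ‖v‖ ^ 2 = 0 := by linarith
    have ht1 : t = 1 := by
      rcases mul_eq_zero.mp this with h | h
      · linarith
      · exact absurd h hnv
    have : c - a = b - a := by rw [ht, ht1, one_smul]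
    have := sub_left_injective this
    -- c = b
    exact this

lemma two_point_set {α : Type*} {S : Set α}
    (h : ∀ a ∈ S, ∀ b ∈ S, ∀ c ∈ S, a = b ∨ c = a ∨ c = b) :
    S.Finite ∧ S.ncard ≤ 2 := by
  by_cases hsub : S.Subsingleton
  · refine ⟨hsub.finite, ?_⟩
    rcases S.eq_empty_or_nonempty with rfl | ⟨a, ha⟩
    · simp
    · have : S ⊆ {a} := fun x hx => hsub hx ha
      calc S.ncard ≤ ({a} : Set α).ncard := Set.ncard_le_ncard this (Set.finite_singleton a)
        _ ≤ 2 := by simp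
  · rw [Set.not_subsingleton_iff] at hsub
    obtain ⟨a, ha, b, hb, hab⟩ := hsub
    have hS : S ⊆ {a, b} := by
      intro c hc
      rcases h a ha b hb c hc with h1 | h1 | h1
      · exact absurd h1 hab
      · exact Or.inl h1
      · exact Or.inr h1
    have hfin : S.Finite := Set.Finite.subset ((Set.finite_singleton b).insert a) hS
    refine ⟨hfin, ?_⟩
    calc S.ncard ≤ ({a, b} : Set α).ncard :=
          Set.ncard_le_ncard hS ((Set.finite_singleton b).insert a)
      _ ≤ 2 := by rw [Set.ncard_pair hab]

/-- **Midplane to midjoints, nondegenerate case.** If the midplane `P` is not parallel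
to any of the three midcircle planes, then each `Mᵢ ∩ P` has at most 2 points and the
set of midjoint triples is finite with at most 8 elements. -/
theorem midplane_to_midjoints_finite (N q : E3) (hN : N ≠ 0)
    (Ni : Fin 3 → E3) (B : Fin 3 → E3) (ℓ : Fin 3 → ℝ)
    (hNi : ∀ i, ‖Ni i‖ = 1) (hℓ : ∀ i, 0 < ℓ i)
    (hcross : ∀ i, cross3 N (Ni i) ≠ 0) :
    let M : Fin 3 → Set E3 := fun i => {x | ⟪Ni i, x - B i⟫ = 0 ∧ ‖x - B i‖ = ℓ i}
    let P : Set E3 := {x | ⟪N, x - q⟫ = 0}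
    let S : Set (E3 × E3 × E3) :=
      {m | m.1 ∈ M 0 ∩ P ∧ m.2.1 ∈ M 1 ∩ P ∧ m.2.2 ∈ M 2 ∩ P}
    (∀ i, (M i ∩ P).Finite ∧ (M i ∩ P).ncard ≤ 2) ∧
    (S.Finite ∧ S.ncard ≤ 8) := by
  intro M P S
  have hMP : ∀ i, (M i ∩ P).Finite ∧ (M i ∩ P).ncard ≤ 2 := by
    intro i
    exact two_point_set (circle_inter_plane N q hN (Ni i) (B i) (ℓ i) (hcross i))
  refine ⟨hMP, ?_⟩
  have hSeq : S = (M 0 ∩ P) ×ˢ ((M 1 ∩ P) ×ˢ (M 2 ∩ P)) := by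
    ext ⟨x, y, z⟩
    simp [S, Set.mem_prod]
  have h0 := hMP 0
  have h1 := hMP 1
  have h2 := hMP 2
  have hfin : S.Finite := by
    rw [hSeq]
    exact Set.Finite.prod h0.1 (Set.Finite.prod h1.1 h2.1)
  refine ⟨hfin, ?_⟩
  rw [hSeq]
  have hp : ∀ {α β : Type} (s : Set α) (t : Set β), (s ×ˢ t).ncard = s.ncard * t.ncard := by
    intro α β s t
    rw [← Nat.card_coe_set_eq, ← Nat.card_coe_set_eq, ← Nat.card_coe_set_eq,
      ← Nat.card_prod]
    exact Nat.card_congr (Equiv.Set.prod s t)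
  rw [hp, hp]
  calc (M 0 ∩ P).ncard * ((M 1 ∩ P).ncard * (M 2 ∩ P).ncard)
      ≤ 2 * (2 * 2) := by
        exact Nat.mul_le_mul h0.2 (Nat.mul_le_mul h1.2 h2.2)
    _ = 8 := by norm_num
end
end

section
/- Let N ∈ ℝ³ be nonzero, q ∈ ℝ³, D_c = R_{[N,q]}(0), N_D = R_{[N,0]}(−e₃), and let T ∈ ℝ³ with T ∉ Z≤0. Then T lies on the forward-pointing ray {D_c + t·N_D : t ≥ 0} if and only if there exists K ∈ Z≤0 with ‖K − q‖ = ‖T − q‖ such that N is a nonzero scalar multiple of T − K. The same holds for the backward-pointing ray {D_c + t·N_D : t ≤ 0} with Z≤0 replaced by Z≥0 in both occurrences. -/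
open RealInnerProductSpace

noncomputable section

lemma lemA (N q : E3) (t : ℝ) :
    refl3 N q 0 + t • refl3 N 0 (-e3) = refl3 N q ((-t) • e3) := by
  unfold refl3
  simp only [inner_sub_right, inner_neg_right, inner_smul_right, inner_zero_right, sub_zero,
    zero_sub]
  match_scalars <;> ring

lemma lemB (N q a : E3) : ‖refl3 N q a - q‖ = ‖a - q‖ := by
  by_cases hN : N = 0
  · simp [refl3, hN]
  · have hn : ‖N‖ ^ 2 ≠ 0 := pow_ne_zero _ (norm_ne_zero_iff.mpr hN)
    have h : ‖refl3 N q a - q‖ ^ 2 = ‖a - q‖ ^ 2 := by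
      have e : refl3 N q a - q = (a - q) - (2 * ⟪N, a - q⟫ / ‖N‖ ^ 2) • N := by
        unfold refl3; abel_nf
      rw [e, norm_sub_sq_real, real_inner_smul_right, norm_smul, mul_pow,
        Real.norm_eq_abs, sq_abs, real_inner_comm]
      field_simp
      ring
    rw [← Real.sqrt_sq (norm_nonneg (refl3 N q a - q)), h, Real.sqrt_sq (norm_nonneg _)]

lemma lemC (N q T K : E3) (hN : N ≠ 0) (hTK : T ≠ K) :
    T = refl3 N q K ↔ (‖K - q‖ = ‖T - q‖ ∧ ∃ c : ℝ, c ≠ 0 ∧ N = c • (T - K)) := by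
  have hn : ‖N‖ ^ 2 ≠ 0 := pow_ne_zero _ (norm_ne_zero_iff.mpr hN)
  constructor
  · rintro rfl
    refine ⟨(lemB N q K).symm, ?_⟩
    set s : ℝ := -(2 * ⟪N, K - q⟫ / ‖N‖ ^ 2) with hs
    have hTKs : refl3 N q K - K = s • N := by unfold refl3; rw [hs]; module
    have hs0 : s ≠ 0 := by
      intro h0
      apply hTK
      have : refl3 N q K - K = 0 := by rw [hTKs, h0, zero_smul]
      rw [sub_eq_zero] at this; exact this
    exact ⟨s⁻¹, inv_ne_zero hs0, by rw [hTKs, smul_smul, inv_mul_cancel₀ hs0, one_smul]⟩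
  · rintro ⟨hnorm, c, hc, hNc⟩
    set u : E3 := T - K with hu
    have hu0 : u ≠ 0 := sub_ne_zero.mpr hTK
    have key : 2 * ⟪u, K - q⟫ = -(‖u‖ ^ 2) := by
      have h2 : ‖K - q‖ ^ 2 = ‖(K - q) + u‖ ^ 2 := by
        rw [hnorm]; congr 1; rw [hu]; abel_nf
      rw [norm_add_sq_real] at h2
      rw [real_inner_comm] at h2
      linarith
    have hun : ‖u‖ ^ 2 ≠ 0 := pow_ne_zero _ (norm_ne_zero_iff.mpr hu0)
    have : refl3 N q K = T := by
      unfold refl3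
      rw [hNc]
      rw [inner_smul_left, smul_smul, norm_smul, mul_pow, Real.norm_eq_abs, sq_abs]
      have hd : c ^ 2 * ‖u‖ ^ 2 ≠ 0 := mul_ne_zero (pow_ne_zero _ hc) hun
      have hcoef : 2 * ((starRingEnd ℝ) c * ⟪u, K - q⟫) / (c ^ 2 * ‖u‖ ^ 2) * c = -1 := by
        have h1 : (starRingEnd ℝ) c = c := rfl
        rw [h1, div_mul_eq_mul_div]
        have h2 : 2 * (c * ⟪u, K - q⟫) * c = -(c ^ 2 * ‖u‖ ^ 2) := by
          linear_combination c ^ 2 * key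
        rw [h2, neg_div, div_self hd]
      rw [hcoef, hu]
      module
    exact this.symm

/-- **Constrained-midplane affine pointing.** For a midplane with normal `N ≠ 0`
through `q`, and a target `T ∉ Z≤0`: the configuration points at `T` iff there is
`K ∈ Z≤0` on the sphere centered at `q` through `T` with `N` a nonzero multiple of
`T − K`; analogously for backward-pointing with `Z≥0`. -/
theorem constrained_affine_pointing (N q : E3) (hN : N ≠ 0) (T : E3) :
    (T ∉ Zneg →
      ((∃ t : ℝ, 0 ≤ t ∧ T = refl3 N q 0 + t • refl3 N 0 (-e3)) ↔
        ∃ K ∈ Zneg, ‖K - q‖ = ‖T - q‖ ∧ ∃ c : ℝ, c ≠ 0 ∧ N = c • (T - K))) ∧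
    (T ∉ Zpos →
      ((∃ t : ℝ, t ≤ 0 ∧ T = refl3 N q 0 + t • refl3 N 0 (-e3)) ↔
        ∃ K ∈ Zpos, ‖K - q‖ = ‖T - q‖ ∧ ∃ c : ℝ, c ≠ 0 ∧ N = c • (T - K))) := by
  constructor
  · intro hT
    constructor
    · rintro ⟨t, ht, hTt⟩
      rw [lemA] at hTt
      refine ⟨(-t) • e3, ⟨-t, by linarith, rfl⟩, ?_⟩
      have hTK : T ≠ (-t) • e3 := fun h => hT ⟨-t, by linarith, h⟩
      exact ((lemC N q T ((-t) • e3) hN hTK).mp hTt)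
    · rintro ⟨K, ⟨s, hs, rfl⟩, hrest⟩
      have hTK : T ≠ s • e3 := fun h => hT ⟨s, hs, h⟩
      have := (lemC N q T (s • e3) hN hTK).mpr hrest
      refine ⟨-s, by linarith, ?_⟩
      rw [lemA, neg_neg]; exact this
  · intro hT
    constructor
    · rintro ⟨t, ht, hTt⟩
      rw [lemA] at hTt
      refine ⟨(-t) • e3, ⟨-t, by linarith, rfl⟩, ?_⟩
      have hTK : T ≠ (-t) • e3 := fun h => hT ⟨-t, by linarith, h⟩
      exact ((lemC N q T ((-t) • e3) hN hTK).mp hTt)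
    · rintro ⟨K, ⟨s, hs, rfl⟩, hrest⟩
      have hTK : T ≠ s • e3 := fun h => hT ⟨s, hs, h⟩
      have := (lemC N q T (s • e3) hN hTK).mpr hrest
      refine ⟨-s, by linarith, ?_⟩
      rw [lemA, neg_neg]; exact this
end
end

section
/- Let N ∈ ℝ³ be nonzero, q ∈ ℝ³, D_c = R_{[N,q]}(0), N_D = R_{[N,0]}(−e₃), and let T = T_z·e₃ with T_z ≤ 0 (so T ∈ Z≤0). Then T lies on the forward-pointing ray {D_c + t·N_D : t ≥ 0} if and only if either ⟨N, T − q⟩ = 0 (the midplane contains both q and T), or N is a nonzero scalar multiple of e₃ and ⟨q, e₃⟩ ≤ T_z/2. -/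
open RealInnerProductSpace

noncomputable section

lemma e3_ne : e3 ≠ 0 := by
  intro h
  have : (e3 : E3) 2 = 0 := by rw [h]; rfl
  simp [e3] at this

lemma inner_e3_e3 : ⟪e3, e3⟫ = (1:ℝ) := by
  simp [e3, EuclideanSpace.inner_single_left]

lemma key_s8 (N q : E3) (Tz t : ℝ) :
    (Tz • e3 = refl3 N q 0 + t • refl3 N 0 (-e3)) ↔
    ((Tz + t) • e3 = (2 * (⟪N, q⟫ + t * ⟪N, e3⟫) / ‖N‖ ^ 2) • N) := by
  have h1 : refl3 N q 0 = (2 * ⟪N, q⟫ / ‖N‖ ^ 2) • N := by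
    simp only [refl3, zero_sub, inner_neg_right, zero_sub]
    module
  have h2 : refl3 N 0 (-e3) = -e3 + (2 * ⟪N, e3⟫ / ‖N‖ ^ 2) • N := by
    simp [refl3, inner_neg_right]
    module
  rw [h1, h2]
  constructor <;> intro h <;> linear_combination (norm := module) h


/-- **Constrained-midplane pointing at an axis target.** For a midplane with normal
`N ≠ 0` through `q` and target `T = T_z • e₃` with `T_z ≤ 0`: the configuration points
at `T` iff either the midplane contains `T`, or `N` is a nonzero multiple of `e₃` and
`⟪q, e₃⟫ ≤ T_z/2`. -/
theorem constrained_pointing_axis_target (N q : E3) (hN : N ≠ 0)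
    (Tz : ℝ) (hTz : Tz ≤ 0) :
    (∃ t : ℝ, 0 ≤ t ∧ Tz • e3 = refl3 N q 0 + t • refl3 N 0 (-e3)) ↔
      (⟪N, Tz • e3 - q⟫ = 0 ∨
        ((∃ c : ℝ, c ≠ 0 ∧ N = c • e3) ∧ ⟪q, e3⟫ ≤ Tz / 2)) := by
  have hs : ‖N‖ ^ 2 ≠ 0 := pow_ne_zero 2 (norm_ne_zero_iff.2 hN)
  constructor
  · rintro ⟨t, ht, heq⟩
    rw [key_s8] at heq
    by_cases h0 : Tz + t = 0
    · left
      rw [h0, zero_smul] at heq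
      have hco : 2 * (⟪N, q⟫ + t * ⟪N, e3⟫) / ‖N‖ ^ 2 = 0 := by
        rcases smul_eq_zero.1 heq.symm with h | h
        · exact h
        · exact absurd h hN
      have hab : ⟪N, q⟫ + t * ⟪N, e3⟫ = 0 := by
        have h2 := (div_eq_zero_iff.1 hco).resolve_right hs
        linarith
      have hteq : t = -Tz := by linarith
      rw [inner_sub_right, real_inner_smul_right]
      rw [hteq] at hab
      linarith
    · right
      set k := 2 * (⟪N, q⟫ + t * ⟪N, e3⟫) / ‖N‖ ^ 2 with hk
      have hk0 : k ≠ 0 := by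
        intro h
        rw [h, zero_smul] at heq
        exact h0 (smul_eq_zero.1 heq |>.resolve_right e3_ne)
      have hNc : N = ((Tz + t) / k) • e3 := by
        have h2 : k⁻¹ • ((Tz + t) • e3) = k⁻¹ • (k • N) := by rw [heq]
        rw [smul_smul, smul_smul, inv_mul_cancel₀ hk0, one_smul] at h2
        rw [← h2, div_eq_inv_mul]
      set c := (Tz + t) / k with hc
      have hc0 : c ≠ 0 := div_ne_zero h0 hk0
      refine ⟨⟨c, hc0, hNc⟩, ?_⟩
      set q2 := ⟪q, e3⟫ with hq2
      have ha : ⟪N, q⟫ = c * q2 := by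
        rw [hNc, real_inner_smul_left, real_inner_comm]
      have hb : ⟪N, e3⟫ = c := by
        rw [hNc, real_inner_smul_left, inner_e3_e3, mul_one]
      have hsn : ‖N‖ ^ 2 = c ^ 2 := by
        rw [← real_inner_self_eq_norm_sq, hNc, real_inner_smul_left,
          real_inner_smul_right, inner_e3_e3]
        ring
      have hkc : Tz + t = k * c := by
        have h3 : (Tz + t) • e3 = (k * c) • e3 := by rw [heq, hNc, smul_smul]
        exact smul_left_injective ℝ e3_ne h3
      have hfin : Tz + t = 2 * (q2 + t) := by
        have h4 : 2 * (c * q2 + t * c) / c ^ 2 * c = 2 * (q2 + t) := by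
          field_simp
        rw [hkc, hk, ha, hb, hsn, h4]
      linarith
  · rintro (h | ⟨⟨c, hc0, hNc⟩, hq⟩)
    · refine ⟨-Tz, by linarith, ?_⟩
      rw [key_s8]
      have hab : ⟪N, q⟫ + (-Tz) * ⟪N, e3⟫ = 0 := by
        rw [inner_sub_right, real_inner_smul_right] at h
        linarith
      rw [hab]
      simp
    · set q2 := ⟪q, e3⟫ with hq2
      refine ⟨Tz - 2 * q2, by linarith, ?_⟩
      rw [key_s8]
      have ha : ⟪N, q⟫ = c * q2 := by
        rw [hNc, real_inner_smul_left, real_inner_comm]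
      have hb : ⟪N, e3⟫ = c := by
        rw [hNc, real_inner_smul_left, inner_e3_e3, mul_one]
      have hsn : ‖N‖ ^ 2 = c ^ 2 := by
        rw [← real_inner_self_eq_norm_sq, hNc, real_inner_smul_left,
          real_inner_smul_right, inner_e3_e3]
        ring
      rw [ha, hb, hsn, hNc, smul_smul]
      congr 1
      field_simp
      ring
end
end

section
/- Let ρ̂ ∈ ℝ³ be a unit vector with ⟨ρ̂, e₃⟩ = 0, let T_ρ, T_z ∈ ℝ with T_ρ ≠ 0, and set T = T_ρ·ρ̂ + T_z·e₃. For t ∈ ℝ, define c(t) = (‖T‖² − t²)/‖T − t·e₃‖² and r(t) = c(t)·(T − t·e₃) = ρ(t)·ρ̂ + z(t)·e₃ where ρ(t) = c(t)·T_ρ and z(t) = c(t)·(T_z − t). Then for every t ∈ ℝ: ρ(t)³ + ρ(t)·z(t)² + T_ρ·(z(t)² − ρ(t)²) − 2T_z·ρ(t)·z(t) = 0. -/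
open RealInnerProductSpace

noncomputable section

lemma e3_norm : ‖e3‖ = 1 := by
  simp [e3, EuclideanSpace.norm_single]

lemma comb_norm_sq (ρhat : E3) (hρ : ‖ρhat‖ = 1) (hperp : ⟪ρhat, e3⟫ = 0)
    (a b : ℝ) : ‖a • ρhat + b • e3‖ ^ 2 = a ^ 2 + b ^ 2 := by
  rw [norm_add_sq_real, norm_smul, norm_smul, real_inner_smul_left,
    real_inner_smul_right, hperp, hρ, e3_norm]
  simp [mul_pow, sq_abs]

/-- **The rational parametrization lies on the cubic.** With `T = T_ρ • ρ̂ + T_z • e₃`,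
`T_ρ ≠ 0`, `c(t) = (‖T‖² − t²)/‖T − t•e₃‖²`, `ρ(t) = c(t)·T_ρ`, `z(t) = c(t)·(T_z − t)`,
one has `E_T(ρ(t), z(t)) = 0` for every `t`. -/
theorem affine_locus_param_on_cubic (ρhat : E3) (hρ : ‖ρhat‖ = 1)
    (hperp : ⟪ρhat, e3⟫ = 0) (Tρ Tz : ℝ) (hTρ : Tρ ≠ 0) (t : ℝ) :
    let T := Tρ • ρhat + Tz • e3
    let c := (‖T‖ ^ 2 - t ^ 2) / ‖T - t • e3‖ ^ 2
    let ρ := c * Tρ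
    let z := c * (Tz - t)
    ρ ^ 3 + ρ * z ^ 2 + Tρ * (z ^ 2 - ρ ^ 2) - 2 * Tz * ρ * z = 0 := by
  intro T c ρ z
  have hT : ‖T‖ ^ 2 = Tρ ^ 2 + Tz ^ 2 := comb_norm_sq ρhat hρ hperp Tρ Tz
  have hTt : ‖T - t • e3‖ ^ 2 = Tρ ^ 2 + (Tz - t) ^ 2 := by
    have : T - t • e3 = Tρ • ρhat + (Tz - t) • e3 := by
      simp [T, sub_smul]; abel
    rw [this, comb_norm_sq ρhat hρ hperp]
  have hD : Tρ ^ 2 + (Tz - t) ^ 2 ≠ 0 := by positivity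
  show (c * Tρ) ^ 3 + (c * Tρ) * (c * (Tz - t)) ^ 2 +
    Tρ * ((c * (Tz - t)) ^ 2 - (c * Tρ) ^ 2) - 2 * Tz * (c * Tρ) * (c * (Tz - t)) = 0
  have hc : c = (Tρ ^ 2 + Tz ^ 2 - t ^ 2) / (Tρ ^ 2 + (Tz - t) ^ 2) := by
    simp [c, hT, hTt]
  rw [hc]
  field_simp
  ring
end
end

section
/- Let ρ̂ ∈ ℝ³ be a unit vector with ⟨ρ̂, e₃⟩ = 0, let N_ρ, N_z, ρ, z ∈ ℝ with (N_ρ, N_z) ≠ (0, 0) and (ρ, z) ≠ (0, 0), and set N = N_ρ·ρ̂ + N_z·e₃ and x = ρ·ρ̂ + z·e₃. Define F(x) = 2(⟨x, e₃⟩/‖x‖²)·x − e₃. Then there exists a nonzero c ∈ ℝ with N = c·F(x) if and only if N_ρ·(z² − ρ²) − 2N_z·ρz = 0. -/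
open RealInnerProductSpace

noncomputable section

/-- The distal normal field `F(x) = 2(⟪x, e₃⟫/‖x‖²) • x − e₃`. -/
def F (x : E3) : E3 := (2 * ⟪x, e3⟫ / ‖x‖ ^ 2) • x - e3

/-- **Az/El pointing locus.** With `N = N_ρ • ρ̂ + N_z • e₃ ≠ 0` and
`x = ρ • ρ̂ + z • e₃ ≠ 0`, the direction `N` is a nonzero multiple of `F(x)` iff
`Ẽ_N(ρ, z) = N_ρ(z² − ρ²) − 2N_z ρz = 0`. -/
theorem azel_pointing_locus (ρhat : E3) (hρ : ‖ρhat‖ = 1) (hperp : ⟪ρhat, e3⟫ = 0)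
    (Nρ Nz ρ z : ℝ) (hN : (Nρ, Nz) ≠ (0, 0)) (hx : (ρ, z) ≠ (0, 0)) :
    (∃ c : ℝ, c ≠ 0 ∧ Nρ • ρhat + Nz • e3 = c • F (ρ • ρhat + z • e3)) ↔
      Nρ * (z ^ 2 - ρ ^ 2) - 2 * Nz * ρ * z = 0 := by

  have he3 : ⟪e3, e3⟫ = 1 := by
    simp [e3, EuclideanSpace.inner_single_left, EuclideanSpace.single_apply]
  have hperp' : ⟪e3, ρhat⟫ = 0 := by rw [real_inner_comm]; exact hperp
  have hρρ : ⟪ρhat, ρhat⟫ = 1 := by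
    rw [real_inner_self_eq_norm_sq, hρ]; norm_num
  have hor : ρ ≠ 0 ∨ z ≠ 0 := by
    by_contra h
    push_neg at h
    exact hx (by simp [h.1, h.2])
  have hspos : 0 < ρ ^ 2 + z ^ 2 := by
    rcases hor with h | h <;> positivity
  have hs : ρ ^ 2 + z ^ 2 ≠ 0 := ne_of_gt hspos
  have hxz : ⟪ρ • ρhat + z • e3, e3⟫ = z := by
    simp only [inner_add_left, real_inner_smul_left, hperp, he3]
    ring
  have hxx : ‖ρ • ρhat + z • e3‖ ^ 2 = ρ ^ 2 + z ^ 2 := by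
    rw [← real_inner_self_eq_norm_sq]
    simp only [inner_add_left, inner_add_right, real_inner_smul_left,
      real_inner_smul_right, hperp, hperp', he3, hρρ]
    ring
  have hF : F (ρ • ρhat + z • e3) =
      ((2 * z * ρ) / (ρ ^ 2 + z ^ 2)) • ρhat +
      ((z ^ 2 - ρ ^ 2) / (ρ ^ 2 + z ^ 2)) • e3 := by
    unfold F
    rw [hxz, hxx]
    match_scalars <;> field_simp <;> ring
  have hcoord : ∀ a b a' b' : ℝ, a • ρhat + b • e3 = a' • ρhat + b' • e3 →
      a = a' ∧ b = b' := by
    intro a b a' b' h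
    constructor
    · have := congrArg (fun v => ⟪ρhat, v⟫) h
      simp only [inner_add_right, real_inner_smul_right, hρρ, hperp,
        mul_one, mul_zero, add_zero] at this
      exact this
    · have := congrArg (fun v => ⟪e3, v⟫) h
      simp only [inner_add_right, real_inner_smul_right, he3, hperp',
        mul_one, mul_zero, zero_add] at this
      exact this
  constructor
  · rintro ⟨c, hc, heq⟩
    rw [hF, smul_add, smul_smul, smul_smul] at heq
    obtain ⟨h1, h2⟩ := hcoord _ _ _ _ heq
    rw [h1, h2]
    field_simp
    ring
  · intro hE
    refine ⟨(2 * z * ρ * Nρ + (z ^ 2 - ρ ^ 2) * Nz) / (ρ ^ 2 + z ^ 2), ?_, ?_⟩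
    · intro hc
      have hT : 2 * z * ρ * Nρ + (z ^ 2 - ρ ^ 2) * Nz = 0 := by
        field_simp at hc
        linarith [hc]
      have hNor : Nρ ≠ 0 ∨ Nz ≠ 0 := by
        by_contra h
        push_neg at h
        exact hN (by simp [h.1, h.2])
      have key : (ρ ^ 2 + z ^ 2) ^ 2 * (Nρ ^ 2 + Nz ^ 2) =
          (2 * z * ρ * Nρ + (z ^ 2 - ρ ^ 2) * Nz) ^ 2 +
          (Nρ * (z ^ 2 - ρ ^ 2) - 2 * Nz * ρ * z) ^ 2 := by ring
      rw [hT, hE] at key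
      have hNpos : 0 < Nρ ^ 2 + Nz ^ 2 := by
        rcases hNor with h | h <;> positivity
      nlinarith [mul_pos (pow_pos hspos 2) hNpos]
    · have h1 : Nρ * ((ρ ^ 2 + z ^ 2) * (ρ ^ 2 + z ^ 2)) =
          (2 * z * ρ * Nρ + (z ^ 2 - ρ ^ 2) * Nz) * (2 * z * ρ) := by
        linear_combination (z ^ 2 - ρ ^ 2) * hE
      have h2 : Nz * ((ρ ^ 2 + z ^ 2) * (ρ ^ 2 + z ^ 2)) =
          (2 * z * ρ * Nρ + (z ^ 2 - ρ ^ 2) * Nz) * (z ^ 2 - ρ ^ 2) := by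
        linear_combination (-(2 * z * ρ)) * hE
      rw [hF, smul_add, smul_smul, smul_smul]
      congr 1
      · congr 1
        rw [div_mul_div_comm, eq_div_iff (by positivity)]
        linear_combination h1
      · congr 1
        rw [div_mul_div_comm, eq_div_iff (by positivity)]
        linear_combination h2
end
end
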